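/- Let q be a prime power, m ≥ 2 an integer, and n = q^m − 1, and set δ_max = q^{⌈m/2⌉} − 1 − (q−2)·[m is odd]. Let α be a primitive element of F_{q^m}, and for an integer δ with 2 ≤ δ ≤ δ_max let C be the primitive, narrow-sense BCH code of designed distance δ over F_q, i.e. C = {c ∈ F_q^n : Σ_{i=0}^{n−1} c_i α^{ij} = 0 for all 1 ≤ j ≤ δ−1}. Then the minimum distance of the Euclidean dual code C^⊥ is at least δ_max + 1. -/
import Mathlib

open Finset Polynomial

private lemma transform_dvd {q m t u j k : ℕ} (hq : 1 ≤ q) (htu : t + u = m)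
    (h : q ^ m - 1 ∣ j * q ^ t + k) : q ^ m - 1 ∣ k * q ^ u + j := by
  have hqm : 1 ≤ q ^ m := Nat.one_le_pow _ _ hq
  have h1 : q ^ t * q ^ u = q ^ m := by rw [← pow_add, htu]
  have h2 : j * (q ^ m - 1) + j = j * q ^ m := by
    rw [← Nat.mul_succ]; congr 1; omega
  have h3 : j * q ^ t * q ^ u = j * q ^ m := by rw [mul_assoc, h1]
  have h4 : (j * q ^ t + k) * q ^ u = j * q ^ t * q ^ u + k * q ^ u := by ring
  have hmul : (j * q ^ t + k) * q ^ u = j * (q ^ m - 1) + (k * q ^ u + j) := by omega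
  have h5 : q ^ m - 1 ∣ (j * q ^ t + k) * q ^ u := h.mul_right _
  rw [hmul] at h5
  exact (Nat.dvd_add_right (dvd_mul_left _ j)).mp h5

private lemma posAux {j k e : ℕ} (hjk : 1 ≤ j + k) (he : 1 ≤ e) : 0 < j * e + k := by
  rcases Nat.eq_zero_or_pos k with rfl | hk0
  · have hj1 : 1 ≤ j := by omega
    have : 1 * 1 ≤ j * e := Nat.mul_le_mul hj1 he
    omega
  · omega

private lemma keyA {q m : ℕ} (hq : 2 ≤ q) (hm : 2 ≤ m) {D : ℕ}
    (hD : D = q ^ ((m + 1) / 2) - 1 - (q - 2) * (if Odd m then 1 else 0))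
    {j k t : ℕ} (hj : j < D) (hk : k < D) (hjk : 1 ≤ j + k) (ht : t < m) :
    ¬ (q ^ m - 1 ∣ j * q ^ t + k) := by
  intro hdvd
  set s := (m + 1) / 2 with hs
  have hs1 : 1 ≤ s := by omega
  have hq0 : 0 < q := by omega
  have hB1 : 1 ≤ q ^ (s - 1) := Nat.one_le_pow _ _ hq0
  have hAB : q ^ s = q ^ (s - 1) * q := by
    rw [← pow_succ]; congr 1; omega
  have hAq : q ≤ q ^ s := by
    calc q = q ^ 1 := (pow_one q).symm
    _ ≤ q ^ s := Nat.pow_le_pow_right hq0 hs1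
  have hqt1 : (1:ℕ) ≤ q ^ t := Nat.one_le_pow _ _ hq0
  have hqu1 : (1:ℕ) ≤ q ^ (m - t) := Nat.one_le_pow _ _ hq0
  rcases Nat.even_or_odd m with he | ho
  · have hnotodd : ¬ Odd m := by simpa [Nat.not_odd_iff_even] using he
    rw [if_neg hnotodd, mul_zero, Nat.sub_zero] at hD
    have hm2 : m = s + s := by
      obtain ⟨r, hr⟩ := he; omega
    have hqm : q ^ m = q ^ s * q ^ s := by rw [hm2, pow_add]
    have hj2 : j + 2 ≤ q ^ s := by omega
    have hk2 : k + 2 ≤ q ^ s := by omega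
    by_cases hts : t ≤ s
    · have hqt : q ^ t ≤ q ^ s := Nat.pow_le_pow_right hq0 hts
      have hle2 : q ^ m ≤ j * q ^ t + k + 1 := by
        have := Nat.le_of_dvd (posAux hjk hqt1) hdvd; omega
      have h6 : j * q ^ t ≤ j * q ^ s := Nat.mul_le_mul_left _ hqt
      have h5 : j * q ^ s ≤ (q ^ s - 2) * q ^ s := Nat.mul_le_mul_right _ (by omega)
      have h7 : (q ^ s - 2) * q ^ s + 2 * q ^ s = q ^ s * q ^ s := by
        rw [← Nat.add_mul]; congr 1; omega
      omega
    · push_neg at hts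
      have hu := transform_dvd (by omega) (show t + (m - t) = m by omega) hdvd
      have hqu : q ^ (m - t) ≤ q ^ (s - 1) := Nat.pow_le_pow_right hq0 (by omega)
      have hle2 : q ^ m ≤ k * q ^ (m - t) + j + 1 := by
        have := Nat.le_of_dvd (posAux (by omega) hqu1) hu; omega
      have h6 : k * q ^ (m - t) ≤ k * q ^ (s - 1) := Nat.mul_le_mul_left _ hqu
      have h5 : k * q ^ (s - 1) ≤ (q ^ s - 2) * q ^ (s - 1) :=
        Nat.mul_le_mul_right _ (by omega)
      have h7 : (q ^ s - 2) * q ^ (s - 1) + 2 * q ^ (s - 1) = q ^ s * q ^ (s - 1) := by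
        rw [← Nat.add_mul]; congr 1; omega
      have h8 : q ^ s * q ^ s = (q ^ s * q ^ (s - 1)) * q := by rw [hAB]; ring
      have h9 : (q ^ s * q ^ (s - 1)) * 2 ≤ (q ^ s * q ^ (s - 1)) * q :=
        Nat.mul_le_mul_left _ hq
      have h10 : q ^ s * 1 ≤ q ^ s * q ^ (s - 1) := Nat.mul_le_mul_left _ hB1
      omega
  · rw [if_pos ho, mul_one] at hD
    have hm2 : m = s + (s - 1) := by
      obtain ⟨r, hr⟩ := ho; omega
    have hqm : q ^ m = q ^ s * q ^ (s - 1) := by rw [hm2, pow_add]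
    have hj2 : j + q ≤ q ^ s := by omega
    have hk2 : k + q ≤ q ^ s := by omega
    have hqB : q * q ^ (s - 1) = q ^ s := by rw [hAB]; ring
    by_cases hts : t ≤ s - 1
    · have hqt : q ^ t ≤ q ^ (s - 1) := Nat.pow_le_pow_right hq0 hts
      have hle2 : q ^ m ≤ j * q ^ t + k + 1 := by
        have := Nat.le_of_dvd (posAux hjk hqt1) hdvd; omega
      have h6 : j * q ^ t ≤ j * q ^ (s - 1) := Nat.mul_le_mul_left _ hqt
      have h5 : j * q ^ (s - 1) ≤ (q ^ s - q) * q ^ (s - 1) :=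
        Nat.mul_le_mul_right _ (by omega)
      have h7 : (q ^ s - q) * q ^ (s - 1) + q * q ^ (s - 1) = q ^ s * q ^ (s - 1) := by
        rw [← Nat.add_mul]; congr 1; omega
      omega
    · push_neg at hts
      have hu := transform_dvd (by omega) (show t + (m - t) = m by omega) hdvd
      have hqu : q ^ (m - t) ≤ q ^ (s - 1) := Nat.pow_le_pow_right hq0 (by omega)
      have hle2 : q ^ m ≤ k * q ^ (m - t) + j + 1 := by
        have := Nat.le_of_dvd (posAux (by omega) hqu1) hu; omega
      have h6 : k * q ^ (m - t) ≤ k * q ^ (s - 1) := Nat.mul_le_mul_left _ hqu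
      have h5 : k * q ^ (s - 1) ≤ (q ^ s - q) * q ^ (s - 1) :=
        Nat.mul_le_mul_right _ (by omega)
      have h7 : (q ^ s - q) * q ^ (s - 1) + q * q ^ (s - 1) = q ^ s * q ^ (s - 1) := by
        rw [← Nat.add_mul]; congr 1; omega
      omega

private lemma fixed_mem_range {F E : Type*} [Field F] [Fintype F] [Field E] [Fintype E]
    [Algebra F E] {q : ℕ} (hF : Fintype.card F = q) (x : E) (hx : x ^ q = x) :
    ∃ c : F, algebraMap F E c = x := by
  classical
  have hq2 : 1 < q := hF ▸ Fintype.one_lt_card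
  by_contra hc
  push_neg at hc
  set P : Polynomial E := X ^ q - X with hP
  have hP0 : P ≠ 0 := FiniteField.X_pow_card_sub_X_ne_zero E hq2
  have hdeg : P.natDegree = q := FiniteField.X_pow_card_sub_X_natDegree_eq E hq2
  have hroot : ∀ z : E, z ^ q = z → z ∈ P.roots := by
    intro z hz
    rw [mem_roots hP0]
    simp [hP, Polynomial.IsRoot, hz]
  set S : Finset E := insert x (Finset.univ.image (algebraMap F E)) with hSdef
  have hcard : S.card = q + 1 := by
    rw [Finset.card_insert_of_notMem (by
      simp only [Finset.mem_image, Finset.mem_univ, true_and]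
      rintro ⟨c, hcend⟩; exact hc c hcend)]
    rw [Finset.card_image_of_injective _ (algebraMap F E).injective, Finset.card_univ, hF]
  have hsub : S ⊆ P.roots.toFinset := by
    intro z hz
    rw [Multiset.mem_toFinset]
    rcases Finset.mem_insert.mp hz with h | h
    · rw [h]; exact hroot x hx
    · obtain ⟨c, _, rfl⟩ := Finset.mem_image.mp h
      apply hroot
      rw [← map_pow]
      congr 1
      rw [← hF]
      exact FiniteField.pow_card c
  have hle := (Finset.card_le_card hsub).trans
    ((Multiset.toFinset_card_le _).trans (P.card_roots'.trans_eq hdeg))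
  omega

private lemma tau_exists_ne {E : Type*} [Field E] [Fintype E] {q m : ℕ} (hq : 2 ≤ q)
    (hm : 1 ≤ m) (hE : Fintype.card E = q ^ m) :
    ∃ x : E, ∑ t ∈ Finset.range m, x ^ q ^ t ≠ 0 := by
  set P : Polynomial E := ∑ t ∈ Finset.range m, X ^ q ^ t with hP
  have hco : P.coeff (q ^ (m - 1)) = 1 := by
    rw [hP, Polynomial.finset_sum_coeff]
    rw [Finset.sum_eq_single (m - 1)]
    · rw [Polynomial.coeff_X_pow, if_pos rfl]
    · intro b _ hb
      rw [Polynomial.coeff_X_pow, if_neg]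
      exact fun hbe => hb (Nat.pow_right_injective hq hbe.symm)
    · intro h
      exact absurd (Finset.mem_range.mpr (by omega)) h
  have hP0 : P ≠ 0 := by
    intro h
    rw [h, Polynomial.coeff_zero] at hco
    exact one_ne_zero hco.symm
  have hdeg : P.natDegree ≤ q ^ (m - 1) := by
    apply Polynomial.natDegree_sum_le_of_forall_le
    intro t ht
    rw [Polynomial.natDegree_X_pow]
    exact Nat.pow_le_pow_right (by omega) (by have := Finset.mem_range.mp ht; omega)
  have hlt : P.natDegree < Fintype.card E := by
    have : q ^ (m - 1) < q ^ m := Nat.pow_lt_pow_right (by omega) (by omega)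
    omega
  obtain ⟨x, hx⟩ := P.exists_eval_ne_zero_of_natDegree_lt_card hP0
    (by rw [Cardinal.mk_fintype]; exact_mod_cast hlt)
  refine ⟨x, ?_⟩
  intro h
  apply hx
  rw [hP, Polynomial.eval_finset_sum]
  simpa using h

private lemma geom_zero {E : Type*} [Field E] {n : ℕ} {α : E} (hα : orderOf α = n)
    {s : ℕ} (hs : ¬ n ∣ s) : ∑ i : Fin n, (α ^ s) ^ (i : ℕ) = 0 := by
  have h1 : α ^ s ≠ 1 := by
    intro h
    exact hs (hα ▸ orderOf_dvd_of_pow_eq_one h)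
  have h2 : (α ^ s) ^ n = 1 := by
    rw [← pow_mul, mul_comm, pow_mul, ← hα, pow_orderOf_eq_one, one_pow]
  rw [Fin.sum_univ_eq_sum_range (fun i => (α ^ s) ^ i) n, geom_sum_eq h1, h2, sub_self, zero_div]

/-- Primitive, narrow-sense BCH code of designed distance `δ`. -/
def bchCode (F : Type*) {E : Type*} [Field F] [Field E] [Algebra F E]
    (n : ℕ) (α : E) (δ : ℕ) : Submodule F (Fin n → F) where
  carrier := {c | ∀ j : ℕ, 1 ≤ j → j ≤ δ - 1 →
    ∑ i : Fin n, algebraMap F E (c i) * α ^ ((i : ℕ) * j) = 0}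
  zero_mem' := by intro j _ _; simp
  add_mem' := by
    intro a b ha hb j h1 h2
    have hA := ha j h1 h2
    have hB := hb j h1 h2
    simp only [Pi.add_apply, map_add, add_mul]
    rw [Finset.sum_add_distrib, hA, hB, add_zero]
  smul_mem' := by
    intro r a ha j h1 h2
    have hA := ha j h1 h2
    simp only [Pi.smul_apply, smul_eq_mul, map_mul, mul_assoc]
    rw [← Finset.mul_sum, hA, mul_zero]

/-- Euclidean dual of a set of codewords. -/
def dualSet {F : Type*} [Field F] {n : ℕ} (C : Set (Fin n → F)) : Set (Fin n → F) :=
  {y | ∀ x ∈ C, ∑ i, x i * y i = 0}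

/-- For a primitive, narrow-sense BCH code over `F_q` of length `q^m - 1`,
`m ≥ 2`, with designed distance `2 ≤ δ ≤ δ_max = q^⌈m/2⌉ - 1 - (q-2)·[m odd]`,
the Euclidean dual code has minimum distance at least `δ_max + 1`. -/
theorem bch_euclidean_dual_distance
    (q m : ℕ) (hq : IsPrimePow q) (hm : 2 ≤ m)
    (F E : Type*) [Field F] [Fintype F] [DecidableEq F] [Field E] [Fintype E]
    [Algebra F E]
    (hF : Fintype.card F = q) (hE : Fintype.card E = q ^ m)
    (α : E) (hα : orderOf α = q ^ m - 1)
    (δ : ℕ) (hδ1 : 2 ≤ δ)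
    (hδ2 : δ ≤ q ^ ((m + 1) / 2) - 1 - (q - 2) * (if Odd m then 1 else 0)) :
    ∀ y ∈ dualSet (bchCode F (q ^ m - 1) α δ : Set (Fin (q ^ m - 1) → F)),
      y ≠ 0 →
        q ^ ((m + 1) / 2) - 1 - (q - 2) * (if Odd m then 1 else 0) + 1 ≤
          hammingNorm y := by
  intro y hy hy0
  set D : ℕ := q ^ ((m + 1) / 2) - 1 - (q - 2) * (if Odd m then 1 else 0) with hDdef
  by_contra hcon
  push_neg at hcon
  have hq2 : 2 ≤ q := hq.two_le
  have hqm4 : 4 ≤ q ^ m := by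
    calc (4:ℕ) = 2 * 2 := rfl
    _ ≤ q * q := Nat.mul_le_mul hq2 hq2
    _ = q ^ 2 := (sq q).symm
    _ ≤ q ^ m := Nat.pow_le_pow_right (by omega) hm
  have hD2 : 2 ≤ D := le_trans hδ1 hδ2
  -- characteristic
  obtain ⟨p, e, hpp', he, hpe⟩ := hq
  have hp : p.Prime := hpp'.nat_prime
  have hcardE : Fintype.card E = p ^ (e * m) := by rw [hE, ← hpe, ← pow_mul]
  haveI : CharP E (ringChar E) := ringChar.charP E
  obtain ⟨n', hp2, hc2⟩ := FiniteField.card E (ringChar E)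
  have hpp : p = ringChar E := by
    have hdvd : p ∣ ringChar E ^ (n' : ℕ) := by
      rw [← hc2, hcardE]
      exact dvd_pow_self p (by positivity)
    exact (Nat.prime_dvd_prime_iff_eq hp hp2).mp (hp.dvd_of_dvd_pow hdvd)
  haveI hchar : CharP E p := by rw [hpp]; exact ringChar.charP E
  haveI : ExpChar E p := ExpChar.prime hp
  -- Frobenius powers
  have hfrob : ∀ t : ℕ, ∃ φ : E →+* E, ∀ x : E, φ x = x ^ q ^ t := by
    intro t
    refine ⟨iterateFrobenius E p (e * t), fun x => ?_⟩
    rw [iterateFrobenius_def, ← hpe, ← pow_mul]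
  choose Φ hΦ using hfrob
  have hxqm : ∀ x : E, x ^ q ^ m = x := by
    intro x; rw [← hE]; exact FiniteField.pow_card x
  -- trace-like map is Frobenius-fixed
  have taufix : ∀ x : E,
      (∑ t ∈ Finset.range m, x ^ q ^ t) ^ q = ∑ t ∈ Finset.range m, x ^ q ^ t := by
    intro x
    have h1 : (∑ t ∈ Finset.range m, x ^ q ^ t) ^ q
        = ∑ t ∈ Finset.range m, x ^ q ^ (t + 1) := by
      calc (∑ t ∈ Finset.range m, x ^ q ^ t) ^ q
          = Φ 1 (∑ t ∈ Finset.range m, x ^ q ^ t) := by rw [hΦ 1, pow_one]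
        _ = ∑ t ∈ Finset.range m, Φ 1 (x ^ q ^ t) := map_sum _ _ _
        _ = ∑ t ∈ Finset.range m, x ^ q ^ (t + 1) := by
            refine Finset.sum_congr rfl fun t _ => ?_
            rw [hΦ 1, pow_one, ← pow_mul, ← pow_succ]
    have key1 : ∑ t ∈ Finset.range (m + 1), x ^ q ^ t
        = (∑ t ∈ Finset.range m, x ^ q ^ (t + 1)) + x ^ q ^ 0 :=
      Finset.sum_range_succ' (fun t => x ^ q ^ t) m
    have key2 : ∑ t ∈ Finset.range (m + 1), x ^ q ^ t
        = (∑ t ∈ Finset.range m, x ^ q ^ t) + x ^ q ^ m :=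
      Finset.sum_range_succ (fun t => x ^ q ^ t) m
    have h4 : x ^ q ^ m = x ^ q ^ 0 := by rw [pow_zero, pow_one, hxqm]
    have key3 := key1.symm.trans key2
    rw [h4] at key3
    rw [h1]
    exact add_right_cancel key3
  have yfix : ∀ (i : Fin (q ^ m - 1)) (t : ℕ),
      (algebraMap F E (y i)) ^ q ^ t = algebraMap F E (y i) := by
    intro i t
    rw [← map_pow]
    congr 1
    have := FiniteField.pow_card_pow t (y i)
    rwa [hF] at this
  -- main system of equations
  have maineq : ∀ k : ℕ, k < D →
      ∑ i : Fin (q ^ m - 1), algebraMap F E (y i) * α ^ ((i : ℕ) * k) = 0 := by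
    intro k hk
    set v := ∑ i : Fin (q ^ m - 1), algebraMap F E (y i) * α ^ ((i : ℕ) * k) with hvdef
    by_contra hv
    have hv1 : ∀ t : ℕ, v ^ q ^ t
        = ∑ i : Fin (q ^ m - 1), algebraMap F E (y i) * α ^ ((i : ℕ) * k * q ^ t) := by
      intro t
      calc v ^ q ^ t = Φ t v := (hΦ t v).symm
        _ = ∑ i : Fin (q ^ m - 1), Φ t (algebraMap F E (y i) * α ^ ((i : ℕ) * k)) := by
            rw [hvdef, map_sum]
        _ = ∑ i : Fin (q ^ m - 1), algebraMap F E (y i) * α ^ ((i : ℕ) * k * q ^ t) := by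
            refine Finset.sum_congr rfl fun i _ => ?_
            rw [map_mul, hΦ t, hΦ t, yfix, ← pow_mul]
    have hall : ∀ β : E, ∑ t ∈ Finset.range m, (β * v) ^ q ^ t = 0 := by
      intro β
      have hex : ∀ i : Fin (q ^ m - 1), ∃ cF : F,
          algebraMap F E cF = ∑ t ∈ Finset.range m, (β * α ^ ((i : ℕ) * k)) ^ q ^ t :=
        fun i => fixed_mem_range hF _ (taufix _)
      choose c hc using hex
      have hcmem : c ∈ bchCode F (q ^ m - 1) α δ := by
        intro j' h1 h2
        have hterm : ∀ i : Fin (q ^ m - 1),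
            algebraMap F E (c i) * α ^ ((i : ℕ) * j')
              = ∑ t ∈ Finset.range m, β ^ q ^ t * (α ^ (k * q ^ t + j')) ^ (i : ℕ) := by
          intro i
          rw [hc i, Finset.sum_mul]
          refine Finset.sum_congr rfl fun t _ => ?_
          rw [mul_pow, ← pow_mul, mul_assoc, ← pow_add]
          congr 1
          rw [← pow_mul]
          congr 1
          ring
        calc ∑ i : Fin (q ^ m - 1), algebraMap F E (c i) * α ^ ((i : ℕ) * j')
            = ∑ i : Fin (q ^ m - 1), ∑ t ∈ Finset.range m,
                β ^ q ^ t * (α ^ (k * q ^ t + j')) ^ (i : ℕ) :=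
              Finset.sum_congr rfl fun i _ => hterm i
          _ = ∑ t ∈ Finset.range m, ∑ i : Fin (q ^ m - 1),
                β ^ q ^ t * (α ^ (k * q ^ t + j')) ^ (i : ℕ) := Finset.sum_comm
          _ = 0 := by
              refine Finset.sum_eq_zero fun t ht => ?_
              rw [← Finset.mul_sum,
                geom_zero hα (keyA hq2 hm hDdef hk (show j' < D by omega) (by omega)
                  (Finset.mem_range.mp ht)), mul_zero]
      have hortoE : ∑ i : Fin (q ^ m - 1),
          (∑ t ∈ Finset.range m, (β * α ^ ((i : ℕ) * k)) ^ q ^ t) * algebraMap F E (y i)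
            = 0 := by
        have h0 := congrArg (algebraMap F E) (hy c hcmem)
        rw [map_sum, map_zero] at h0
        calc ∑ i : Fin (q ^ m - 1),
            (∑ t ∈ Finset.range m, (β * α ^ ((i : ℕ) * k)) ^ q ^ t) * algebraMap F E (y i)
            = ∑ i : Fin (q ^ m - 1), algebraMap F E (c i * y i) := by
              refine Finset.sum_congr rfl fun i _ => ?_
              rw [map_mul, hc i]
          _ = 0 := h0
      calc ∑ t ∈ Finset.range m, (β * v) ^ q ^ t
          = ∑ t ∈ Finset.range m, ∑ i : Fin (q ^ m - 1),
              β ^ q ^ t * (algebraMap F E (y i) * α ^ ((i : ℕ) * k * q ^ t)) := by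
            refine Finset.sum_congr rfl fun t _ => ?_
            rw [mul_pow, hv1 t, Finset.mul_sum]
        _ = ∑ i : Fin (q ^ m - 1), ∑ t ∈ Finset.range m,
              β ^ q ^ t * (algebraMap F E (y i) * α ^ ((i : ℕ) * k * q ^ t)) :=
            Finset.sum_comm
        _ = ∑ i : Fin (q ^ m - 1),
              (∑ t ∈ Finset.range m, (β * α ^ ((i : ℕ) * k)) ^ q ^ t)
                * algebraMap F E (y i) := by
            refine Finset.sum_congr rfl fun i _ => ?_
            rw [Finset.sum_mul]
            refine Finset.sum_congr rfl fun t _ => ?_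
            rw [mul_pow, ← pow_mul]
            ring
        _ = 0 := hortoE
    obtain ⟨x0, hx0⟩ := tau_exists_ne hq2 (by omega) hE
    have hfin := hall (x0 * v⁻¹)
    rw [mul_assoc, inv_mul_cancel₀ hv, mul_one] at hfin
    exact hx0 hfin
  -- Vandermonde step
  have hwle : (Finset.univ.filter (fun i : Fin (q ^ m - 1) => y i ≠ 0)).card ≤ D := by
    have h1 : hammingNorm y ≤ D := by omega
    simpa [hammingNorm] using h1
  set S := Finset.univ.filter (fun i : Fin (q ^ m - 1) => y i ≠ 0) with hSdef
  have hα0 : α ≠ 0 := by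
    intro h0
    have h1 : α ^ (q ^ m - 1) = 1 := by rw [← hα]; exact pow_orderOf_eq_one α
    rw [h0, zero_pow (by omega)] at h1
    exact zero_ne_one h1
  set u : Eˣ := Units.mk0 α hα0 with hu
  have hou : orderOf u = q ^ m - 1 := by
    rw [← orderOf_units, hu, Units.val_mk0, hα]
  set ee := S.equivFin with hee
  set xs : Fin S.card → E :=
    fun l => α ^ (((ee.symm l : {i // i ∈ S}) : Fin (q ^ m - 1)) : ℕ) with hxs
  have hxinj : Function.Injective xs := by
    intro a b hab
    have h1 : u ^ ((((ee.symm a) : {i // i ∈ S}) : Fin (q ^ m - 1)) : ℕ)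
        = u ^ ((((ee.symm b) : {i // i ∈ S}) : Fin (q ^ m - 1)) : ℕ) := by
      apply Units.ext
      simpa [hu, Units.val_pow_eq_pow_val] using hab
    have h2 := pow_injOn_Iio_orderOf (x := u)
      (by rw [hou]; exact Set.mem_Iio.mpr (Fin.is_lt _))
      (by rw [hou]; exact Set.mem_Iio.mpr (Fin.is_lt _)) h1
    have h3 : (((ee.symm a) : {i // i ∈ S}) : Fin (q ^ m - 1))
        = (((ee.symm b) : {i // i ∈ S}) : Fin (q ^ m - 1)) := Fin.ext h2
    exact ee.symm.injective (Subtype.ext h3)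
  have hsys : ∀ kk : Fin S.card,
      ∑ l : Fin S.card, xs l ^ (kk : ℕ)
        * algebraMap F E (y ((ee.symm l : {i // i ∈ S}) : Fin (q ^ m - 1))) = 0 := by
    intro kk
    have e1 : ∑ l : Fin S.card, xs l ^ (kk : ℕ)
          * algebraMap F E (y ((ee.symm l : {i // i ∈ S}) : Fin (q ^ m - 1)))
        = ∑ a : {i // i ∈ S},
            (α ^ (((a : Fin (q ^ m - 1))) : ℕ)) ^ (kk : ℕ)
              * algebraMap F E (y (a : Fin (q ^ m - 1))) :=
      Equiv.sum_comp ee.symm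
        (fun a : {i // i ∈ S} =>
          (α ^ (((a : Fin (q ^ m - 1))) : ℕ)) ^ (kk : ℕ)
            * algebraMap F E (y (a : Fin (q ^ m - 1))))
    have e2 : ∑ a : {i // i ∈ S},
          (α ^ (((a : Fin (q ^ m - 1))) : ℕ)) ^ (kk : ℕ)
            * algebraMap F E (y (a : Fin (q ^ m - 1)))
        = ∑ i ∈ S, (α ^ (i : ℕ)) ^ (kk : ℕ) * algebraMap F E (y i) :=
      Finset.sum_coe_sort S (fun i => (α ^ (i : ℕ)) ^ (kk : ℕ) * algebraMap F E (y i))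
    have e3 : ∑ i ∈ S, (α ^ (i : ℕ)) ^ (kk : ℕ) * algebraMap F E (y i)
        = ∑ i : Fin (q ^ m - 1), (α ^ (i : ℕ)) ^ (kk : ℕ) * algebraMap F E (y i) := by
      apply Finset.sum_subset (Finset.subset_univ S)
      intro i _ hiS
      have hyi : y i = 0 := by
        by_contra hne
        exact hiS (by rw [hSdef]; exact Finset.mem_filter.mpr ⟨Finset.mem_univ i, hne⟩)
      rw [hyi, map_zero, mul_zero]
    have e4 : ∑ i : Fin (q ^ m - 1), (α ^ (i : ℕ)) ^ (kk : ℕ) * algebraMap F E (y i) = 0 := by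
      have hme := maineq (kk : ℕ) (lt_of_lt_of_le kk.is_lt hwle)
      rw [← hme]
      refine Finset.sum_congr rfl fun i _ => ?_
      rw [← pow_mul]
      ring
    rw [e1, e2, e3, e4]
  have hdet : ((Matrix.vandermonde xs).transpose).det ≠ 0 := by
    rw [Matrix.det_transpose]
    exact Matrix.det_vandermonde_ne_zero_iff.mpr hxinj
  have hmv : ((Matrix.vandermonde xs).transpose).mulVec
      (fun l => algebraMap F E (y ((ee.symm l : {i // i ∈ S}) : Fin (q ^ m - 1)))) = 0 := by
    funext kk
    have := hsys kk
    simpa [Matrix.mulVec, dotProduct, Matrix.vandermonde, Matrix.transpose_apply]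
      using this
  have hz := Matrix.eq_zero_of_mulVec_eq_zero hdet hmv
  obtain ⟨i0, hi0⟩ : ∃ i, y i ≠ 0 := by
    by_contra hno
    push_neg at hno
    exact hy0 (funext hno)
  have hi0S : i0 ∈ S := by
    rw [hSdef]; exact Finset.mem_filter.mpr ⟨Finset.mem_univ _, hi0⟩
  have hzz := congrFun hz (ee ⟨i0, hi0S⟩)
  simp only [Equiv.symm_apply_apply, Pi.zero_apply] at hzz
  exact hi0 ((map_eq_zero_iff _ (algebraMap F E).injective).mp hzz)
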